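/- Under the hypotheses of the pattern block method, the acceptance probability equals P(Λ) = K / ν(B) > 0, where K = ∫_E f dμ and Λ is the acceptance event { (V_{Ψ(U)}, W_{Ψ(U)}) ∈ B_{Ψ(U)} ∩ Γ[f] }. -/
import Mathlib

open MeasureTheory Set ProbabilityTheory

theorem stmt3 {E : Type*} [MeasurableSpace E] (μ : Measure E) [SigmaFinite μ]
    (f : E → ℝ) (hf : Measurable f) (hf0 : ∀ x, 0 ≤ f x)
    (K : ℝ) (hK : K = ∫ x, f x ∂μ) (hKpos : 0 < K) (hfint : Integrable f μ)
    (ν : Measure (E × ℝ)) (hν : ν = μ.prod volume)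
    (Γ : Set (E × ℝ)) (hΓ : Γ = {p : E × ℝ | 0 ≤ p.2 ∧ p.2 ≤ f p.1})
    (N : ℕ) (B : Fin N → Set (E × ℝ)) (hBm : ∀ i, MeasurableSet (B i))
    (hBpos : ∀ i, 0 < ν (B i))
    (hdisj : ∀ i j, i ≠ j → ν (B i ∩ B j) = 0)
    (Bu : Set (E × ℝ)) (hBu : Bu = ⋃ i, B i)
    (hcover : ν (Γ \ Bu) = 0) (hfin : ν Bu < ⊤)
    {Ω : Type*} [MeasurableSpace Ω] (P : Measure Ω) [IsProbabilityMeasure P]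
    (U : Ω → ℝ) (V : Fin N → Ω → E) (W : Fin N → Ω → ℝ)
    (hU : Measurable U) (hVW : ∀ i, Measurable (fun ω => (V i ω, W i ω)))
    (hUlaw : Measure.map U P = volume.restrict (Ico (0:ℝ) 1))
    (hVWlaw : ∀ i, Measure.map (fun ω => (V i ω, W i ω)) P
      = (ν (B i))⁻¹ • ν.restrict (B i))
    (hindep : ∀ i, IndepFun U (fun ω => (V i ω, W i ω)) P)
    (Ψ : ℝ → Fin N)
    (hΨ : ∀ u ∈ Ico (0:ℝ) 1, ∀ i, Ψ u = i ↔
      (u < ∑ j ∈ Finset.univ.filter (· ≤ i), (ν (B j)).toReal / (ν Bu).toReal ∧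
       ∀ k < i, ¬ u < ∑ j ∈ Finset.univ.filter (· ≤ k), (ν (B j)).toReal / (ν Bu).toReal)) :
    P {ω | (V (Ψ (U ω)) ω, W (Ψ (U ω)) ω) ∈ B (Ψ (U ω)) ∩ Γ}
        = ENNReal.ofReal K / ν Bu ∧
      0 < P {ω | (V (Ψ (U ω)) ω, W (Ψ (U ω)) ω) ∈ B (Ψ (U ω)) ∩ Γ} := by
  classical
  rcases Nat.eq_zero_or_pos N with hN0 | hN0
  · subst hN0; exact (Ψ 0).elim0
  -- measurability of Γ, Bu
  have hΓm : MeasurableSet Γ := by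
    rw [hΓ]
    exact (measurableSet_le measurable_const measurable_snd).inter
      (measurableSet_le measurable_snd (hf.comp measurable_fst))
  have hBum : MeasurableSet Bu := hBu ▸ MeasurableSet.iUnion hBm
  -- ν Γ = ofReal K
  have hνΓ : ν Γ = ENNReal.ofReal K := by
    rw [hν, Measure.prod_apply hΓm]
    have hslice : ∀ x, Prod.mk x ⁻¹' Γ = Icc 0 (f x) := by
      intro x; rw [hΓ]; ext y; simp [Set.mem_Icc]
    calc ∫⁻ x, volume (Prod.mk x ⁻¹' Γ) ∂μ
        = ∫⁻ x, ENNReal.ofReal (f x) ∂μ := by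
          refine lintegral_congr fun x => ?_
          rw [hslice x, Real.volume_Icc, sub_zero]
      _ = ENNReal.ofReal K := by
          rw [hK, ofReal_integral_eq_lintegral_ofReal hfint (ae_of_all _ hf0)]
  have hcap : ν (Bu ∩ Γ) = ENNReal.ofReal K := by
    have h := measure_inter_add_diff (μ := ν) Γ hBum
    rw [hcover, add_zero] at h
    rw [Set.inter_comm, h, hνΓ]
  -- sums of block measures
  have hsumB : ν Bu = ∑ i, ν (B i) := by
    rw [hBu, measure_iUnion₀ (fun i j hij => hdisj i j hij)
      (fun i => (hBm i).nullMeasurableSet), tsum_fintype]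
  have hsumBΓ : ν (Bu ∩ Γ) = ∑ i, ν (B i ∩ Γ) := by
    have hU' : Bu ∩ Γ = ⋃ i, B i ∩ Γ := by rw [hBu, Set.iUnion_inter]
    rw [hU', measure_iUnion₀ ?_ (fun i => ((hBm i).inter hΓm).nullMeasurableSet),
      tsum_fintype]
    intro i j hij
    refine measure_mono_null ?_ (hdisj i j hij)
    intro p hp
    exact ⟨hp.1.1, hp.2.1⟩
  -- finiteness facts
  have hBle : ∀ i, ν (B i) ≤ ν Bu := fun i => measure_mono (hBu ▸ Set.subset_iUnion B i)
  have hBfin : ∀ i, ν (B i) ≠ ⊤ := fun i => ((hBle i).trans_lt hfin).ne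
  have hBune : ν Bu ≠ 0 := (lt_of_lt_of_le (hBpos ⟨0, hN0⟩) (hBle ⟨0, hN0⟩)).ne'
  have hBufin : ν Bu ≠ ⊤ := hfin.ne
  have hbRpos : 0 < (ν Bu).toReal := ENNReal.toReal_pos hBune hBufin
  -- partial sums
  set t : Fin N → ℝ := fun j => (ν (B j)).toReal / (ν Bu).toReal with ht_def
  set s : Fin N → ℝ := fun i => ∑ j ∈ Finset.univ.filter (· ≤ i), t j with hs_def
  set sl : Fin N → ℝ := fun i => ∑ j ∈ Finset.univ.filter (· < i), t j with hsl_def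
  have hΨ' : ∀ u ∈ Ico (0:ℝ) 1, ∀ i, Ψ u = i ↔
      (u < s i ∧ ∀ k < i, ¬ u < s k) := fun u hu i => hΨ u hu i
  have ht0 : ∀ j, 0 ≤ t j := fun j => div_nonneg ENNReal.toReal_nonneg ENNReal.toReal_nonneg
  have htot : ∑ j, t j = 1 := by
    rw [ht_def]
    rw [← Finset.sum_div, ← ENNReal.toReal_sum (fun a _ => hBfin a), ← hsumB]
    exact div_self hbRpos.ne'
  have hsle1 : ∀ i, s i ≤ 1 := by
    intro i
    calc s i ≤ ∑ j, t j :=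
          Finset.sum_le_sum_of_subset_of_nonneg (Finset.filter_subset _ _)
            (fun j _ _ => ht0 j)
      _ = 1 := htot
  have hsl0 : ∀ i, 0 ≤ sl i := fun i => Finset.sum_nonneg fun j _ => ht0 j
  have hstep : ∀ i, s i = sl i + t i := by
    intro i
    have hins : Finset.univ.filter (· ≤ i) = insert i (Finset.univ.filter (· < i)) := by
      ext j
      simp only [Finset.mem_filter, Finset.mem_insert, Finset.mem_univ, true_and]
      constructor
      · intro h; rcases eq_or_lt_of_le h with h | h
        exacts [Or.inl h, Or.inr h]
      · rintro (rfl | h); exacts [le_refl _, h.le]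
    rw [hs_def]
    simp only
    rw [hins, Finset.sum_insert (by simp)]
    rw [hsl_def]; ring
  -- the interval characterization
  have hAiff : ∀ u ∈ Ico (0:ℝ) 1, ∀ i, Ψ u = i ↔ u ∈ Ico (sl i) (s i) := by
    intro u hu i
    rw [hΨ' u hu i, Set.mem_Ico]
    constructor
    · rintro ⟨h1, h2⟩
      refine ⟨?_, h1⟩
      by_cases hi : i.val = 0
      · have he : Finset.univ.filter (· < i) = ∅ := by
          ext j; simp [Fin.lt_def, hi]
        have : sl i = 0 := by rw [hsl_def]; simp [he]
        rw [this]; exact hu.1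
      · obtain ⟨m, hm⟩ := Nat.exists_eq_succ_of_ne_zero hi
        have hmlt : m < N := by omega
        set k : Fin N := ⟨m, hmlt⟩ with hk
        have hki : k < i := by rw [Fin.lt_def]; simp [hk, hm]
        have hsk : s k = sl i := by
          rw [hs_def, hsl_def]
          simp only
          congr 1
          ext j
          simp only [Finset.mem_filter, Finset.mem_univ, true_and, Fin.le_def, Fin.lt_def,
            hk, hm]
          omega
        have := not_lt.mp (h2 k hki)
        linarith [hsk]
    · rintro ⟨h1, h2⟩
      refine ⟨h2, fun k hk => not_lt.mpr ?_⟩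
      have hskl : s k ≤ sl i := by
        refine Finset.sum_le_sum_of_subset_of_nonneg ?_ (fun j _ _ => ht0 j)
        intro j hj
        simp only [Finset.mem_filter, Finset.mem_univ, true_and] at hj ⊢
        exact lt_of_le_of_lt hj hk
      linarith
  -- events
  set A : Fin N → Set ℝ := fun i => Ico (sl i) (s i) with hA_def
  have hAsub : ∀ i, A i ⊆ Ico (0:ℝ) 1 := by
    intro i u hu
    exact ⟨le_trans (hsl0 i) hu.1, lt_of_lt_of_le hu.2 (hsle1 i)⟩
  set D : Fin N → Set Ω :=
    fun i => U ⁻¹' A i ∩ (fun ω => (V i ω, W i ω)) ⁻¹' (B i ∩ Γ) with hD_def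
  have hDm : ∀ i, MeasurableSet (D i) := fun i =>
    (hU measurableSet_Ico).inter ((hVW i) ((hBm i).inter hΓm))
  have hDdisj : Pairwise (Function.onFun Disjoint D) := by
    intro i j hij
    rw [Function.onFun, Set.disjoint_left]
    intro ω hωi hωj
    have hui : U ω ∈ A i := hωi.1
    have huj : U ω ∈ A j := hωj.1
    have hmem : U ω ∈ Ico (0:ℝ) 1 := hAsub i hui
    have h1 : Ψ (U ω) = i := (hAiff _ hmem i).mpr hui
    have h2 : Ψ (U ω) = j := (hAiff _ hmem j).mpr huj
    exact hij (h1 ▸ h2)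
  -- U is a.e. in [0,1)
  have hU1 : P (U ⁻¹' Ico (0:ℝ) 1) = 1 := by
    rw [← Measure.map_apply hU measurableSet_Ico, hUlaw,
      Measure.restrict_apply measurableSet_Ico, Set.inter_self, Real.volume_Ico]
    norm_num
  have hUae : ∀ᵐ ω ∂P, U ω ∈ Ico (0:ℝ) 1 := by
    have hc : P (U ⁻¹' Ico (0:ℝ) 1)ᶜ = 0 := by
      rw [measure_compl (hU measurableSet_Ico) (measure_ne_top P _), hU1, measure_univ,
        tsub_self]
    rw [ae_iff]
    exact hc
  -- the event is a.e. equal to the disjoint union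
  have hae : {ω | (V (Ψ (U ω)) ω, W (Ψ (U ω)) ω) ∈ B (Ψ (U ω)) ∩ Γ} =ᵐ[P] ⋃ i, D i := by
    rw [Filter.eventuallyEq_set]
    filter_upwards [hUae] with ω hω
    simp only [Set.mem_iUnion, Set.mem_setOf_eq, hD_def, Set.mem_inter_iff, Set.mem_preimage]
    constructor
    · intro h
      exact ⟨Ψ (U ω), (hAiff _ hω _).mp rfl, h⟩
    · rintro ⟨i, hA1, hB1⟩
      have hi : Ψ (U ω) = i := (hAiff _ hω i).mpr hA1
      rw [hi]; exact hB1
  -- compute P (D i)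
  have hPD : ∀ i, P (D i) = ν (B i ∩ Γ) * (ν Bu)⁻¹ := by
    intro i
    have h1 : P (D i) = P (U ⁻¹' A i) * P ((fun ω => (V i ω, W i ω)) ⁻¹' (B i ∩ Γ)) :=
      (hindep i).measure_inter_preimage_eq_mul _ _ measurableSet_Ico
        ((hBm i).inter hΓm)
    have h2 : P (U ⁻¹' A i) = ν (B i) * (ν Bu)⁻¹ := by
      rw [← Measure.map_apply hU measurableSet_Ico, hUlaw,
        Measure.restrict_apply measurableSet_Ico,
        Set.inter_eq_left.mpr (hAsub i), Real.volume_Ico]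
      have hdiff : s i - sl i = t i := by linarith [hstep i]
      rw [hdiff, ht_def]
      simp only
      rw [ENNReal.ofReal_div_of_pos hbRpos, ENNReal.ofReal_toReal (hBfin i),
        ENNReal.ofReal_toReal hBufin, div_eq_mul_inv]
    have h3 : P ((fun ω => (V i ω, W i ω)) ⁻¹' (B i ∩ Γ)) = (ν (B i))⁻¹ * ν (B i ∩ Γ) := by
      rw [← Measure.map_apply (hVW i) ((hBm i).inter hΓm), hVWlaw i,
        Measure.smul_apply, Measure.restrict_apply ((hBm i).inter hΓm),
        Set.inter_eq_left.mpr Set.inter_subset_left, smul_eq_mul]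
    rw [h1, h2, h3]
    calc ν (B i) * (ν Bu)⁻¹ * ((ν (B i))⁻¹ * ν (B i ∩ Γ))
        = (ν (B i) * (ν (B i))⁻¹) * ((ν Bu)⁻¹ * ν (B i ∩ Γ)) := by ring
      _ = ν (B i ∩ Γ) * (ν Bu)⁻¹ := by
          rw [ENNReal.mul_inv_cancel (hBpos i).ne' (hBfin i), one_mul, mul_comm]
  have hfinal : P {ω | (V (Ψ (U ω)) ω, W (Ψ (U ω)) ω) ∈ B (Ψ (U ω)) ∩ Γ}
      = ENNReal.ofReal K / ν Bu := by
    rw [measure_congr hae, measure_iUnion hDdisj hDm, tsum_fintype]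
    simp_rw [hPD]
    rw [← Finset.sum_mul, ← hsumBΓ, hcap, div_eq_mul_inv]
  exact ⟨hfinal, hfinal ▸ ENNReal.div_pos (ENNReal.ofReal_pos.mpr hKpos).ne' hBufin⟩
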